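/- arXiv:1603.05052 — 4 statements merged into one kernel-verified Lean document; each statement's English description precedes it below -/
import Mathlib

section
/- Let I, J be two imaginary unit quaternions (I² = J² = -1) and let f : ℍ → ℍ be a slice regular function. Then the L² Gaussian-weighted norms of f on the slices ℂ_I and ℂ_J with parameter ν > 0 satisfy (1/2)‖f‖_I ≤ ‖f‖_J ≤ 2‖f‖_I, where ‖f‖_I² = ∫_{ℂ_I} |f(x+yI)|² e^{-ν(x²+y²)} dx dy. In particular the slice Fock space F^{2,ν}_I(ℍ) does not depend on I. -/
set_option maxHeartbeats 1000000
set_option synthInstance.maxHeartbeats 1000000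

open MeasureTheory Real Quaternion

noncomputable def hermiteW (ν : ℝ) (n : ℕ) (x : ℝ) : ℝ :=
  (-1)^n * Real.exp (ν * x^2 / 2) * iteratedDeriv n (fun t => Real.exp (-ν * t^2)) x

/-- A function `f : ℍ → ℍ` is slice regular if its restriction to every slice
`ℂ_I = ℝ + ℝI` is holomorphic, i.e. real differentiable and annihilated by
the Cauchy-Riemann operator `(1/2)(∂/∂x + I ∂/∂y)`. -/
def SliceRegular (f : Quaternion ℝ → Quaternion ℝ) : Prop :=
  ∀ I : Quaternion ℝ, I^2 = -1 →
    (∀ p : ℝ × ℝ,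
      DifferentiableAt ℝ (fun p : ℝ × ℝ => f ((p.1 : Quaternion ℝ) + p.2 • I)) p) ∧
    (∀ p : ℝ × ℝ,
      fderiv ℝ (fun p : ℝ × ℝ => f ((p.1 : Quaternion ℝ) + p.2 • I)) p (1, 0) +
        I * fderiv ℝ (fun p : ℝ × ℝ => f ((p.1 : Quaternion ℝ) + p.2 • I)) p (0, 1) = 0)

/-- Squared Gaussian-weighted `L²` norm of `f` on the slice `ℂ_I`. -/
noncomputable def sliceNormSq (ν : ℝ) (f : Quaternion ℝ → Quaternion ℝ)
    (I : Quaternion ℝ) : ℝ :=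
  ∫ p : ℝ × ℝ, ‖f ((p.1 : Quaternion ℝ) + p.2 • I)‖^2 * Real.exp (-ν * (p.1^2 + p.2^2))

/-- The kernel of the quaternionic Segal-Bargmann transform. -/
noncomputable def SBkernel (ν : ℝ) (q : Quaternion ℝ) (x : ℝ) : Quaternion ℝ :=
  ((ν/π)^((3:ℝ)/4)) •
    NormedSpace.exp (-(ν/2) • (q^2 + ((x : Quaternion ℝ))^2) + (ν * Real.sqrt 2 * x) • q)

/-- The quaternionic Segal-Bargmann transform. -/
noncomputable def Bargmann (ν : ℝ) (ψ : ℝ → Quaternion ℝ) (q : Quaternion ℝ) :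
    Quaternion ℝ :=
  ∫ x : ℝ, SBkernel ν q x * ψ x

/-- Basic facts about an imaginary unit quaternion: its real part vanishes and it has norm one. -/
theorem quat_unit_facts (J : Quaternion ℝ) (hJ : J^2 = -1) : J.re = 0 ∧ ‖J‖ = 1 := by
  have h := hJ
  rw [sq] at h
  have hre := congrArg QuaternionAlgebra.re h
  have hi := congrArg QuaternionAlgebra.imI h
  have hj := congrArg QuaternionAlgebra.imJ h
  have hk := congrArg QuaternionAlgebra.imK h
  simp [Quaternion.re_mul, Quaternion.imI_mul, Quaternion.imJ_mul, Quaternion.imK_mul]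
    at hre hi hj hk
  have hre0 : J.re = 0 := by
    by_contra hne
    have h1 : J.imI = 0 := by
      have : J.re * J.imI = 0 := by linarith
      exact (mul_eq_zero.mp this).resolve_left hne
    have h2 : J.imJ = 0 := by
      have : J.re * J.imJ = 0 := by linarith
      exact (mul_eq_zero.mp this).resolve_left hne
    have h3 : J.imK = 0 := by
      have : J.re * J.imK = 0 := by linarith
      exact (mul_eq_zero.mp this).resolve_left hne
    nlinarith [hre]
  refine ⟨hre0, ?_⟩
  have hns : normSq J = 1 := by
    rw [Quaternion.normSq_def']
    nlinarith [hre]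
  have := Quaternion.normSq_eq_norm_mul_self J
  nlinarith [norm_nonneg J]

/-- Identity principle for slice-holomorphic functions on a slice: two
`J`-holomorphic functions on `ℝ²` agreeing on the real axis agree everywhere. -/
theorem slice_determined (J : Quaternion ℝ) (hJ : J^2 = -1)
    (F G : ℝ × ℝ → Quaternion ℝ)
    (hF : ∀ p, DifferentiableAt ℝ F p)
    (hFcr : ∀ p, fderiv ℝ F p (1,0) + J * fderiv ℝ F p (0,1) = 0)
    (hG : ∀ p, DifferentiableAt ℝ G p)
    (hGcr : ∀ p, fderiv ℝ G p (1,0) + J * fderiv ℝ G p (0,1) = 0)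
    (h0 : ∀ x : ℝ, F (x, 0) = G (x, 0)) :
    ∀ p, F p = G p := by
  obtain ⟨hre0, hn1⟩ := quat_unit_facts J hJ
  have hJJ : J * J = -1 := by rw [← sq, hJ]
  set φ : ℂ →ₐ[ℝ] Quaternion ℝ := Complex.liftAux J hJJ with hφ
  have hφ_apply : ∀ z : ℂ, φ z = (z.re : Quaternion ℝ) + z.im • J := by
    intro z
    rw [hφ, Complex.liftAux_apply]
    rfl
  have hφ_norm : ∀ z : ℂ, ‖φ z‖ = ‖z‖ := by
    intro z
    rw [hφ_apply]
    have h1 : normSq ((z.re : Quaternion ℝ) + z.im • J) = z.re^2 + z.im^2 := by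
      rw [Quaternion.normSq_def']
      simp [hre0]
      have : J.imI^2 + J.imJ^2 + J.imK^2 = 1 := by
        have h2 := Quaternion.normSq_eq_norm_mul_self J
        rw [Quaternion.normSq_def', hre0, hn1] at h2
        nlinarith
      nlinarith
    have h2 := Quaternion.normSq_eq_norm_mul_self ((z.re : Quaternion ℝ) + z.im • J)
    have h3 : ‖z‖ * ‖z‖ = z.re^2 + z.im^2 := by
      rw [Complex.norm_mul_self_eq_normSq, Complex.normSq_apply]
      ring
    nlinarith [norm_nonneg ((z.re : Quaternion ℝ) + z.im • J), norm_nonneg z]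
  letI : Module ℂ (Quaternion ℝ) := Module.compHom (Quaternion ℝ) (φ : ℂ →+* Quaternion ℝ)
  have smul_def : ∀ (z : ℂ) (q : Quaternion ℝ), z • q = φ z * q := fun _ _ => rfl
  letI : IsScalarTower ℝ ℂ (Quaternion ℝ) := ⟨by
    intro r z q
    rw [smul_def, smul_def, _root_.map_smul, smul_mul_assoc]⟩
  letI : NormedSpace ℂ (Quaternion ℝ) :=
    { norm_smul_le := by
        intro z q
        rw [smul_def, norm_mul, hφ_norm] }
  have key : ∀ H : ℝ × ℝ → Quaternion ℝ, (∀ p, DifferentiableAt ℝ H p) →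
      (∀ p, fderiv ℝ H p (1,0) + J * fderiv ℝ H p (0,1) = 0) →
      Differentiable ℂ (fun z : ℂ => H (z.re, z.im)) := by
    intro H hH hHcr z
    have hcr : fderiv ℝ H (z.re, z.im) (0, 1) = J * fderiv ℝ H (z.re, z.im) (1, 0) := by
      have h1 : fderiv ℝ H (z.re, z.im) (1,0) + J * fderiv ℝ H (z.re, z.im) (0,1) = 0 :=
        hHcr (z.re, z.im)
      have h2 : J * (fderiv ℝ H (z.re, z.im) (1,0) + J * fderiv ℝ H (z.re, z.im) (0,1)) = 0 := by
        rw [h1, mul_zero]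
      rw [mul_add, ← mul_assoc, hJJ, neg_one_mul] at h2
      symm
      rwa [add_neg_eq_zero] at h2
    set e : ℂ →L[ℝ] ℝ × ℝ := Complex.reCLM.prod Complex.imCLM with he
    have hreal : HasFDerivAt (fun z : ℂ => H (z.re, z.im))
        ((fderiv ℝ H (z.re, z.im)).comp e) z :=
      (hH (z.re, z.im)).hasFDerivAt.comp z e.hasFDerivAt
    set L : ℂ →L[ℂ] Quaternion ℝ :=
      ContinuousLinearMap.smulRight (1 : ℂ →L[ℂ] ℂ) (fderiv ℝ H (z.re, z.im) (1,0)) with hL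
    have hrs : L.restrictScalars ℝ = (fderiv ℝ H (z.re, z.im)).comp e := by
      refine ContinuousLinearMap.ext fun w => ?_
      have h1 : ((w.re : ℝ), w.im) = w.re • ((1:ℝ), (0:ℝ)) + w.im • ((0:ℝ), (1:ℝ)) := by
        simp [Prod.ext_iff]
      have h2 : fderiv ℝ H (z.re, z.im) (w.re, w.im) =
          w.re • fderiv ℝ H (z.re, z.im) (1,0) + w.im • (J * fderiv ℝ H (z.re, z.im) (1,0)) := by
        rw [h1, map_add, _root_.map_smul, _root_.map_smul, ← hcr]
      simp only [ContinuousLinearMap.coe_restrictScalars', ContinuousLinearMap.coe_comp',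
        Function.comp_apply, hL, ContinuousLinearMap.smulRight_apply,
        ContinuousLinearMap.one_apply]
      show w • fderiv ℝ H (z.re, z.im) (1,0) = fderiv ℝ H (z.re, z.im) (e w)
      have h3 : e w = (w.re, w.im) := rfl
      rw [h3, h2, smul_def, hφ_apply, add_mul, Quaternion.coe_mul_eq_smul, smul_mul_assoc]
    exact (hasFDerivAt_of_restrictScalars ℝ hreal hrs).differentiableAt
  have hFa : AnalyticOnNhd ℂ (fun z : ℂ => F (z.re, z.im)) Set.univ :=
    Complex.analyticOnNhd_univ_iff_differentiable.mpr (key F hF hFcr)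
  have hGa : AnalyticOnNhd ℂ (fun z : ℂ => G (z.re, z.im)) Set.univ :=
    Complex.analyticOnNhd_univ_iff_differentiable.mpr (key G hG hGcr)
  have hfreq : ∃ᶠ z in nhdsWithin (0:ℂ) {(0:ℂ)}ᶜ,
      (fun z : ℂ => F (z.re, z.im)) z = (fun z : ℂ => G (z.re, z.im)) z := by
    have ht : Filter.Tendsto (fun n : ℕ => ((1 / (n + 1) : ℝ) : ℂ)) Filter.atTop
        (nhdsWithin (0:ℂ) {(0:ℂ)}ᶜ) := by
      rw [tendsto_nhdsWithin_iff]
      constructor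
      · have h1 : Filter.Tendsto (fun n : ℕ => (1 / (n + 1) : ℝ)) Filter.atTop (nhds 0) :=
          tendsto_one_div_add_atTop_nhds_zero_nat
        have h2 := (Complex.continuous_ofReal.tendsto 0).comp h1
        exact h2
      · filter_upwards with n
        simp only [Set.mem_compl_iff, Set.mem_singleton_iff]
        intro hcon
        have h4 : (1 / (n + 1) : ℝ) = 0 := by exact_mod_cast hcon
        have h5 : (0:ℝ) < 1 / (n + 1) := by positivity
        linarith
    exact ht.frequently ((Filter.Eventually.of_forall (fun n => by
      show F (((1 / (n+1) : ℝ):ℂ).re, ((1 / (n+1) : ℝ):ℂ).im) = G _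
      rw [Complex.ofReal_re, Complex.ofReal_im]
      exact h0 _)).frequently)
  have heq := hFa.eqOn_of_preconnected_of_frequently_eq hGa isPreconnected_univ
    (Set.mem_univ 0) hfreq
  intro p
  have h6 := heq (Set.mem_univ ((p.1 : ℂ) + p.2 * Complex.I))
  simpa using h6

/-- The representation formula for slice regular functions. -/
theorem rep_formula (f : Quaternion ℝ → Quaternion ℝ) (hf : SliceRegular f)
    (I J : Quaternion ℝ) (hI : I^2 = -1) (hJ : J^2 = -1) :
    ∀ p : ℝ × ℝ, f ((p.1 : Quaternion ℝ) + p.2 • J) =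
      (2:ℝ)⁻¹ • ((1 - J*I) * f ((p.1 : Quaternion ℝ) + p.2 • I)
        + (1 + J*I) * f ((p.1 : Quaternion ℝ) + (-p.2) • I)) := by
  have hII : ∀ x : Quaternion ℝ, I * (I * x) = -x := fun x => by
    rw [← mul_assoc, ← sq, hI, neg_one_mul]
  have hJJ : ∀ x : Quaternion ℝ, J * (J * x) = -x := fun x => by
    rw [← mul_assoc, ← sq, hJ, neg_one_mul]
  obtain ⟨hdI, hcrI⟩ := hf I hI
  obtain ⟨hdJ, hcrJ⟩ := hf J hJ
  set σL : ℝ × ℝ →L[ℝ] ℝ × ℝ :=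
    (ContinuousLinearMap.fst ℝ ℝ ℝ).prod (-(ContinuousLinearMap.snd ℝ ℝ ℝ)) with hσL
  have hGder : ∀ p : ℝ × ℝ, HasFDerivAt (fun p : ℝ × ℝ =>
      (2:ℝ)⁻¹ • ((1 - J*I) * f ((p.1 : Quaternion ℝ) + p.2 • I)
        + (1 + J*I) * f ((p.1 : Quaternion ℝ) + (-p.2) • I)))
      ((2:ℝ)⁻¹ • ((1 - J*I) • fderiv ℝ (fun p : ℝ × ℝ => f ((p.1 : Quaternion ℝ) + p.2 • I)) p
        + (1 + J*I) • ((fderiv ℝ (fun p : ℝ × ℝ => f ((p.1 : Quaternion ℝ) + p.2 • I))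
            (p.1, -p.2)).comp σL))) p := by
    intro p
    have h1 : HasFDerivAt (fun p : ℝ × ℝ => f ((p.1 : Quaternion ℝ) + p.2 • I))
        (fderiv ℝ (fun p : ℝ × ℝ => f ((p.1 : Quaternion ℝ) + p.2 • I)) p) p :=
      (hdI p).hasFDerivAt
    have h2 : HasFDerivAt (fun q : ℝ × ℝ => f ((q.1 : Quaternion ℝ) + (-q.2) • I))
        ((fderiv ℝ (fun p : ℝ × ℝ => f ((p.1 : Quaternion ℝ) + p.2 • I))
            (p.1, -p.2)).comp σL) p :=
      by
        have hσp : σL p = (p.1, -p.2) := by simp [hσL]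
        have h := (hdI (σL p)).hasFDerivAt.comp p σL.hasFDerivAt
        rw [hσp] at h
        have hfun : (fun q : ℝ × ℝ => f ((q.1 : Quaternion ℝ) + (-q.2) • I)) =
            (fun p : ℝ × ℝ => f ((p.1 : Quaternion ℝ) + p.2 • I)) ∘ σL := by
          funext q
          simp [hσL]
        rw [hfun]
        exact h
    exact ((h1.const_mul (1 - J*I)).add (h2.const_mul (1 + J*I))).const_smul ((2:ℝ)⁻¹)
  have hGd : ∀ p, DifferentiableAt ℝ (fun p : ℝ × ℝ =>
      (2:ℝ)⁻¹ • ((1 - J*I) * f ((p.1 : Quaternion ℝ) + p.2 • I)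
        + (1 + J*I) * f ((p.1 : Quaternion ℝ) + (-p.2) • I))) p :=
    fun p => (hGder p).differentiableAt
  have hGcr : ∀ p : ℝ × ℝ,
      fderiv ℝ (fun p : ℝ × ℝ =>
        (2:ℝ)⁻¹ • ((1 - J*I) * f ((p.1 : Quaternion ℝ) + p.2 • I)
          + (1 + J*I) * f ((p.1 : Quaternion ℝ) + (-p.2) • I))) p (1,0)
      + J * fderiv ℝ (fun p : ℝ × ℝ =>
        (2:ℝ)⁻¹ • ((1 - J*I) * f ((p.1 : Quaternion ℝ) + p.2 • I)
          + (1 + J*I) * f ((p.1 : Quaternion ℝ) + (-p.2) • I))) p (0,1) = 0 := by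
    intro p
    rw [(hGder p).fderiv]
    have h10 : fderiv ℝ (fun p : ℝ × ℝ => f ((p.1 : Quaternion ℝ) + p.2 • I)) p (1, 0)
        = -(I * fderiv ℝ (fun p : ℝ × ℝ => f ((p.1 : Quaternion ℝ) + p.2 • I)) p (0, 1)) :=
      eq_neg_of_add_eq_zero_left (hcrI p)
    have h20 : fderiv ℝ (fun p : ℝ × ℝ => f ((p.1 : Quaternion ℝ) + p.2 • I)) (p.1, -p.2) (1, 0)
        = -(I * fderiv ℝ (fun p : ℝ × ℝ => f ((p.1 : Quaternion ℝ) + p.2 • I))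
              (p.1, -p.2) (0, 1)) :=
      eq_neg_of_add_eq_zero_left (hcrI (p.1, -p.2))
    have e1 : σL ((1:ℝ), (0:ℝ)) = ((1:ℝ), (0:ℝ)) := by
      simp [hσL, Prod.ext_iff]
    have e2 : σL ((0:ℝ), (1:ℝ)) = -((0:ℝ), (1:ℝ)) := by
      simp [hσL, Prod.ext_iff]
    simp only [ContinuousLinearMap.smul_apply, ContinuousLinearMap.add_apply,
      ContinuousLinearMap.coe_comp', Function.comp_apply, e1, e2, map_neg,
      smul_eq_mul, mul_smul_comm]
    rw [h10, h20, ← smul_add]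
    have hz : (1 - J*I) * -(I * fderiv ℝ (fun p : ℝ × ℝ =>
          f ((p.1 : Quaternion ℝ) + p.2 • I)) p (0, 1))
        + (1 + J*I) * -(I * fderiv ℝ (fun p : ℝ × ℝ =>
            f ((p.1 : Quaternion ℝ) + p.2 • I)) (p.1, -p.2) (0, 1))
        + J * ((1 - J*I) * fderiv ℝ (fun p : ℝ × ℝ =>
              f ((p.1 : Quaternion ℝ) + p.2 • I)) p (0, 1)
          + (1 + J*I) * -fderiv ℝ (fun p : ℝ × ℝ =>
              f ((p.1 : Quaternion ℝ) + p.2 • I)) (p.1, -p.2) (0, 1)) = 0 := by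
      set a := fderiv ℝ (fun p : ℝ × ℝ => f ((p.1 : Quaternion ℝ) + p.2 • I)) p (0, 1)
      set b := fderiv ℝ (fun p : ℝ × ℝ => f ((p.1 : Quaternion ℝ) + p.2 • I)) (p.1, -p.2) (0, 1)
      simp only [sub_mul, add_mul, one_mul, mul_neg, neg_mul, mul_add, mul_sub, mul_assoc,
        hII, hJJ, neg_neg]
      abel
    rw [hz, smul_zero]
  intro p
  refine slice_determined J hJ _ _ hdJ hcrJ hGd hGcr (fun x => ?_) p
  show f ((x : Quaternion ℝ) + (0:ℝ) • J) =
    (2:ℝ)⁻¹ • ((1 - J*I) * f ((x : Quaternion ℝ) + (0:ℝ) • I)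
      + (1 + J*I) * f ((x : Quaternion ℝ) + (-(0:ℝ)) • I))
  rw [neg_zero, zero_smul, zero_smul, add_zero]
  rw [← add_mul, sub_add_add_cancel, one_add_one_eq_two,
    show ((2 : Quaternion ℝ)) = ((2:ℝ) : Quaternion ℝ) by norm_cast,
    Quaternion.coe_mul_eq_smul, smul_smul]
  norm_num

/-- One-sided transfer of integrability and the quantitative bound between slices. -/
theorem slice_transfer (ν : ℝ) (f : Quaternion ℝ → Quaternion ℝ) (hf : SliceRegular f)
    (I J : Quaternion ℝ) (hI : I^2 = -1) (hJ : J^2 = -1)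
    (hint : Integrable (fun p : ℝ × ℝ =>
      ‖f ((p.1 : Quaternion ℝ) + p.2 • I)‖^2 * Real.exp (-ν * (p.1^2 + p.2^2)))) :
    Integrable (fun p : ℝ × ℝ =>
      ‖f ((p.1 : Quaternion ℝ) + p.2 • J)‖^2 * Real.exp (-ν * (p.1^2 + p.2^2))) ∧
    (∫ p : ℝ × ℝ, ‖f ((p.1 : Quaternion ℝ) + p.2 • J)‖^2 * Real.exp (-ν * (p.1^2 + p.2^2)))
      ≤ 4 * ∫ p : ℝ × ℝ,
          ‖f ((p.1 : Quaternion ℝ) + p.2 • I)‖^2 * Real.exp (-ν * (p.1^2 + p.2^2)) := by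
  obtain ⟨-, hnI⟩ := quat_unit_facts I hI
  obtain ⟨-, hnJ⟩ := quat_unit_facts J hJ
  set gI : ℝ × ℝ → ℝ := fun p =>
    ‖f ((p.1 : Quaternion ℝ) + p.2 • I)‖^2 * Real.exp (-ν * (p.1^2 + p.2^2)) with hgI
  set gJ : ℝ × ℝ → ℝ := fun p =>
    ‖f ((p.1 : Quaternion ℝ) + p.2 • J)‖^2 * Real.exp (-ν * (p.1^2 + p.2^2)) with hgJ
  set e : ℝ × ℝ ≃ᵐ ℝ × ℝ := (MeasurableEquiv.refl ℝ).prodCongr (MeasurableEquiv.neg ℝ) with he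
  have pres : MeasurePreserving (⇑e) volume volume := by
    have h1 := (MeasurePreserving.id (volume : Measure ℝ)).prod
      (Measure.measurePreserving_neg (volume : Measure ℝ))
    rw [← MeasureTheory.Measure.volume_eq_prod] at h1
    exact h1
  have hσint : Integrable (fun p : ℝ × ℝ => gI (p.1, -p.2)) :=
    (pres.integrable_comp_emb e.measurableEmbedding).mpr hint
  have hσeq : (∫ p : ℝ × ℝ, gI (p.1, -p.2)) = ∫ p : ℝ × ℝ, gI p :=
    pres.integral_comp e.measurableEmbedding gI
  have hpt : ∀ p : ℝ × ℝ, gJ p ≤ 2 * gI p + 2 * gI (p.1, -p.2) := by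
    intro p
    have hrep := rep_formula f hf I J hI hJ p
    set u := f ((p.1 : Quaternion ℝ) + p.2 • I) with hu
    set v := f ((p.1 : Quaternion ℝ) + (-p.2) • I) with hv
    have hb : ‖f ((p.1 : Quaternion ℝ) + p.2 • J)‖ ≤ ‖u‖ + ‖v‖ := by
      rw [hrep]
      have h1 : ‖(1 - J*I) * u‖ ≤ 2 * ‖u‖ := by
        rw [norm_mul]
        have : ‖1 - J*I‖ ≤ 2 := by
          calc ‖1 - J*I‖ ≤ ‖(1 : Quaternion ℝ)‖ + ‖J*I‖ := norm_sub_le _ _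
          _ = 2 := by rw [norm_one, norm_mul, hnI, hnJ]; norm_num
        nlinarith [norm_nonneg u]
      have h2 : ‖(1 + J*I) * v‖ ≤ 2 * ‖v‖ := by
        rw [norm_mul]
        have : ‖1 + J*I‖ ≤ 2 := by
          calc ‖1 + J*I‖ ≤ ‖(1 : Quaternion ℝ)‖ + ‖J*I‖ := norm_add_le _ _
          _ = 2 := by rw [norm_one, norm_mul, hnI, hnJ]; norm_num
        nlinarith [norm_nonneg v]
      calc ‖(2:ℝ)⁻¹ • ((1 - J*I) * u + (1 + J*I) * v)‖
          = (2:ℝ)⁻¹ * ‖(1 - J*I) * u + (1 + J*I) * v‖ := by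
            rw [norm_smul]; norm_num
        _ ≤ (2:ℝ)⁻¹ * (‖(1 - J*I) * u‖ + ‖(1 + J*I) * v‖) := by
            have := norm_add_le ((1 - J*I) * u) ((1 + J*I) * v)
            linarith
        _ ≤ ‖u‖ + ‖v‖ := by linarith
    have hw : (0:ℝ) ≤ Real.exp (-ν * (p.1^2 + p.2^2)) := Real.exp_nonneg _
    have hsq : ‖f ((p.1 : Quaternion ℝ) + p.2 • J)‖^2 ≤ 2 * ‖u‖^2 + 2 * ‖v‖^2 := by
      have h1 : ‖f ((p.1 : Quaternion ℝ) + p.2 • J)‖^2 ≤ (‖u‖ + ‖v‖)^2 :=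
        pow_le_pow_left₀ (norm_nonneg _) hb 2
      nlinarith [sq_nonneg (‖u‖ - ‖v‖)]
    show ‖f ((p.1 : Quaternion ℝ) + p.2 • J)‖^2 * Real.exp (-ν * (p.1^2 + p.2^2))
      ≤ 2 * (‖u‖^2 * Real.exp (-ν * (p.1^2 + p.2^2)))
        + 2 * (‖v‖^2 * Real.exp (-ν * (p.1^2 + (-p.2)^2)))
    have hexp : (-p.2)^2 = p.2^2 := by ring
    rw [hexp]
    nlinarith [mul_le_mul_of_nonneg_right hsq hw]
  have hcJ : Continuous (fun p : ℝ × ℝ => f ((p.1 : Quaternion ℝ) + p.2 • J)) := by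
    rw [continuous_iff_continuousAt]
    exact fun p => ((hf J hJ).1 p).continuousAt
  have hwc : Continuous (fun p : ℝ × ℝ => Real.exp (-ν * (p.1^2 + p.2^2))) := by fun_prop
  have hgJc : Continuous gJ := ((hcJ.norm.pow 2).mul hwc)
  have hgJnn : ∀ p, 0 ≤ gJ p := fun p =>
    mul_nonneg (pow_nonneg (norm_nonneg _) 2) (Real.exp_nonneg _)
  have hbound : Integrable (fun p : ℝ × ℝ => 2 * gI p + 2 * gI (p.1, -p.2)) :=
    (hint.const_mul 2).add (hσint.const_mul 2)
  have hgJint : Integrable gJ := by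
    refine hbound.mono' hgJc.aestronglyMeasurable ?_
    filter_upwards with p
    rw [Real.norm_eq_abs, abs_of_nonneg (hgJnn p)]
    exact hpt p
  refine ⟨hgJint, ?_⟩
  have h5 : (∫ p : ℝ × ℝ, gJ p) ≤ ∫ p : ℝ × ℝ, (2 * gI p + 2 * gI (p.1, -p.2)) :=
    integral_mono hgJint hbound hpt
  have h6 : (∫ p : ℝ × ℝ, (2 * gI p + 2 * gI (p.1, -p.2)))
      = 2 * (∫ p : ℝ × ℝ, gI p) + 2 * ∫ p : ℝ × ℝ, gI (p.1, -p.2) := by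
    rw [integral_add (hint.const_mul 2) (hσint.const_mul 2), integral_const_mul,
      integral_const_mul]
  rw [h6, hσeq] at h5
  linarith

theorem stmt5 (ν : ℝ) (hν : 0 < ν) (f : Quaternion ℝ → Quaternion ℝ)
    (hf : SliceRegular f) (I J : Quaternion ℝ) (hI : I^2 = -1) (hJ : J^2 = -1) :
    ((1/2) * Real.sqrt (sliceNormSq ν f I) ≤ Real.sqrt (sliceNormSq ν f J) ∧
      Real.sqrt (sliceNormSq ν f J) ≤ 2 * Real.sqrt (sliceNormSq ν f I)) ∧
    (Integrable (fun p : ℝ × ℝ =>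
        ‖f ((p.1 : Quaternion ℝ) + p.2 • I)‖^2 * Real.exp (-ν * (p.1^2 + p.2^2))) ↔
      Integrable (fun p : ℝ × ℝ =>
        ‖f ((p.1 : Quaternion ℝ) + p.2 • J)‖^2 * Real.exp (-ν * (p.1^2 + p.2^2)))) := by
  by_cases hi : Integrable (fun p : ℝ × ℝ =>
      ‖f ((p.1 : Quaternion ℝ) + p.2 • I)‖^2 * Real.exp (-ν * (p.1^2 + p.2^2)))
  · obtain ⟨hiJ, hJle⟩ := slice_transfer ν f hf I J hI hJ hi
    obtain ⟨-, hIle⟩ := slice_transfer ν f hf J I hJ hI hiJ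
    have hNI : (0:ℝ) ≤ sliceNormSq ν f I :=
      integral_nonneg fun p => mul_nonneg (pow_nonneg (norm_nonneg _) 2) (Real.exp_nonneg _)
    have hNJ : (0:ℝ) ≤ sliceNormSq ν f J :=
      integral_nonneg fun p => mul_nonneg (pow_nonneg (norm_nonneg _) 2) (Real.exp_nonneg _)
    have hJle' : sliceNormSq ν f J ≤ 4 * sliceNormSq ν f I := hJle
    have hIle' : sliceNormSq ν f I ≤ 4 * sliceNormSq ν f J := hIle
    have hs4 : Real.sqrt 4 = 2 := by
      rw [show (4:ℝ) = 2^2 by norm_num, Real.sqrt_sq (by norm_num : (0:ℝ) ≤ 2)]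
    have h1 : Real.sqrt (sliceNormSq ν f J) ≤ 2 * Real.sqrt (sliceNormSq ν f I) := by
      calc Real.sqrt (sliceNormSq ν f J) ≤ Real.sqrt (4 * sliceNormSq ν f I) :=
            Real.sqrt_le_sqrt hJle'
        _ = 2 * Real.sqrt (sliceNormSq ν f I) := by
            rw [Real.sqrt_mul (by norm_num : (0:ℝ) ≤ 4), hs4]
    have h2 : Real.sqrt (sliceNormSq ν f I) ≤ 2 * Real.sqrt (sliceNormSq ν f J) := by
      calc Real.sqrt (sliceNormSq ν f I) ≤ Real.sqrt (4 * sliceNormSq ν f J) :=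
            Real.sqrt_le_sqrt hIle'
        _ = 2 * Real.sqrt (sliceNormSq ν f J) := by
            rw [Real.sqrt_mul (by norm_num : (0:ℝ) ≤ 4), hs4]
    exact ⟨⟨by linarith, h1⟩, ⟨fun _ => hiJ, fun _ => hi⟩⟩
  · have hiJ : ¬ Integrable (fun p : ℝ × ℝ =>
        ‖f ((p.1 : Quaternion ℝ) + p.2 • J)‖^2 * Real.exp (-ν * (p.1^2 + p.2^2))) := by
      intro h
      exact hi (slice_transfer ν f hf J I hJ hI h).1
    have hNI : sliceNormSq ν f I = 0 := integral_undef hi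
    have hNJ : sliceNormSq ν f J = 0 := integral_undef hiJ
    rw [hNI, hNJ]
    refine ⟨⟨?_, ?_⟩, ⟨fun h => absurd h hi, fun h => absurd h hiJ⟩⟩ <;>
      simp [Real.sqrt_zero]
end

section
/- Let f(q) = Σ_{n≥0} qⁿ aₙ be a slice regular function on ℍ with ‖f‖² := (π/ν) Σ_{n≥0} (n!/νⁿ)|aₙ|² < ∞. Then for every q ∈ ℍ, |f(q)| ≤ (ν/π)^{1/2} e^{(ν/2)|q|²} ‖f‖. -/
open MeasureTheory Real Quaternion

theorem stmt6 (ν : ℝ) (hν : 0 < ν) (a : ℕ → Quaternion ℝ)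
    (ha : Summable (fun n : ℕ => (n.factorial : ℝ) / ν^n * ‖a n‖^2)) (q : Quaternion ℝ) :
    ‖∑' n : ℕ, q^n * a n‖ ≤
      Real.sqrt (ν/π) * Real.exp ((ν/2) * ‖q‖^2) *
        Real.sqrt ((π/ν) * ∑' n : ℕ, (n.factorial : ℝ) / ν^n * ‖a n‖^2) := by
  set g : ℕ → ℝ := fun n => (n.factorial : ℝ) / ν^n * ‖a n‖^2 with hg
  set u : ℕ → ℝ := fun n => (ν * ‖q‖^2)^n / n.factorial with hu
  have hgnn : ∀ n, 0 ≤ g n := fun n => by positivity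
  have hunn : ∀ n, 0 ≤ u n := fun n => by positivity
  have hsu : Summable u := Real.summable_pow_div_factorial _
  -- pointwise identity
  have hpt : ∀ n, ‖q^n * a n‖ = Real.sqrt (u n) * Real.sqrt (g n) := by
    intro n
    rw [← Real.sqrt_mul (hunn n)]
    have : u n * g n = (‖q‖^n * ‖a n‖)^2 := by
      simp only [hu, hg]
      field_simp
      ring_nf
    rw [this, Real.sqrt_sq (by positivity), norm_mul, norm_pow]
  -- summability of the norms
  have hssq : Summable (fun n => Real.sqrt (u n) * Real.sqrt (g n)) := by
    apply Summable.of_nonneg_of_le (fun n => by positivity)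
      (fun n => ?_) ((hsu.add ha).div_const 2)
    have h1 := Real.sq_sqrt (hunn n)
    have h2 := Real.sq_sqrt (hgnn n)
    nlinarith [sq_nonneg (Real.sqrt (u n) - Real.sqrt (g n))]
  have hsn : Summable (fun n => ‖q^n * a n‖) := by
    simpa only [hpt] using hssq
  -- Cauchy–Schwarz for tsums
  have hCS : ∑' n, Real.sqrt (u n) * Real.sqrt (g n) ≤
      Real.sqrt (∑' n, u n) * Real.sqrt (∑' n, g n) := by
    refine Summable.tsum_le_of_sum_le hssq fun s => ?_
    refine (Real.sum_sqrt_mul_sqrt_le s hunn hgnn).trans ?_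
    exact mul_le_mul (Real.sqrt_le_sqrt (Summable.sum_le_tsum s (fun n _ => hunn n) hsu))
      (Real.sqrt_le_sqrt (Summable.sum_le_tsum s (fun n _ => hgnn n) ha))
      (Real.sqrt_nonneg _) (Real.sqrt_nonneg _)
  have hU : ∑' n, u n = Real.exp (ν * ‖q‖^2) := by
    rw [Real.exp_eq_exp_ℝ, NormedSpace.exp_eq_tsum_div]
  have hsqrtexp : Real.sqrt (Real.exp (ν * ‖q‖^2)) = Real.exp ((ν/2) * ‖q‖^2) := by
    rw [show ν * ‖q‖^2 = (ν/2) * ‖q‖^2 + (ν/2) * ‖q‖^2 by ring, Real.exp_add,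
      Real.sqrt_mul_self (Real.exp_nonneg _)]
  calc ‖∑' n : ℕ, q^n * a n‖ ≤ ∑' n, ‖q^n * a n‖ := norm_tsum_le_tsum_norm hsn
    _ = ∑' n, Real.sqrt (u n) * Real.sqrt (g n) := by simp only [hpt]
    _ ≤ Real.sqrt (∑' n, u n) * Real.sqrt (∑' n, g n) := hCS
    _ = Real.exp ((ν/2) * ‖q‖^2) * Real.sqrt (∑' n, g n) := by rw [hU, hsqrtexp]
    _ = Real.sqrt (ν/π) * Real.exp ((ν/2) * ‖q‖^2) *
        Real.sqrt ((π/ν) * ∑' n, g n) := by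
      rw [Real.sqrt_mul (by positivity), mul_comm (Real.sqrt (ν/π)),
        mul_assoc, ← mul_assoc (Real.sqrt (ν/π)), ← Real.sqrt_mul (by positivity)]
      have : ν/π * (π/ν) = 1 := by
        field_simp
      rw [this, Real.sqrt_one, one_mul]
end

section
/- For every quaternion q and real x, the kernel A(q;x) := (ν/π)^{3/4} e^{-(ν/2)(q²+x²) + ν√2 q x} equals the sum Σ_{n≥0} [h_n^ν(x)/‖h_n^ν‖_{L²(ℝ)}] · [qⁿ/‖e_n‖], where ‖h_n^ν‖²_{L²} = 2ⁿνⁿ n! (π/ν)^{1/2} and ‖e_n‖² = π n!/ν^{n+1}; equivalently A(q;x) = (ν/π)^{3/4} Σ_{n≥0} h_n^ν(x) qⁿ / (n! 2^{n/2}). -/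
open MeasureTheory Real Quaternion

section Helpers
open Finset
open scoped Nat

lemma dfact_cast (j : ℕ) : (((2*j-1)‼ : ℕ) : ℝ) = ((2*j)! : ℝ) / (2^j * (j ! : ℝ)) := by
  cases j with
  | zero => simp
  | succ m =>
    have key : (2*(m+1))! = 2^(m+1) * (m+1)! * (2*m+1)‼ := by
      have h1 : (2*m+1+1)! = (2*m+1+1)‼ * (2*m+1)‼ :=
        Nat.factorial_eq_mul_doubleFactorial (2*m+1)
      have h2 : (2*(m+1))‼ = 2^(m+1) * (m+1)! := Nat.doubleFactorial_two_mul (m+1)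
      have h3 : 2*(m+1) = 2*m+1+1 := by ring
      rw [h3, h1, ← h3, h2]
    have h4 : 2*(m+1)-1 = 2*m+1 := by omega
    rw [h4, key]
    push_cast
    field_simp

lemma hermite_sum (n : ℕ) (y : ℝ) :
    (Polynomial.aeval y (Polynomial.hermite n)) =
    ∑ j ∈ Finset.range (n/2+1),
      (-1:ℝ)^j * ((n ! : ℝ) / (2^j * (j ! : ℝ) * ((n-2*j)! : ℝ))) * y^(n-2*j) := by
  rw [Polynomial.aeval_eq_sum_range, Polynomial.natDegree_hermite]
  have hsub : (Finset.range (n/2+1)).image (fun j => n - 2*j) ⊆ Finset.range (n+1) := by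
    intro i hi
    simp only [Finset.mem_image, Finset.mem_range] at hi ⊢
    omega
  rw [← Finset.sum_subset hsub]
  · rw [Finset.sum_image (by intro j1 h1 j2 h2 h; simp only [Finset.coe_range, Set.mem_Iio] at h1 h2 h; omega)]
    refine Finset.sum_congr rfl (fun j hj => ?_)
    simp only [Finset.mem_range] at hj
    have h2j : 2*j ≤ n := by omega
    have hco : (Polynomial.hermite n).coeff (n-2*j) = (-1)^j * (2*j-1)‼ * Nat.choose n (n-2*j) := by
      have := Polynomial.coeff_hermite_explicit j (n-2*j)
      rwa [show 2*j+(n-2*j) = n from by omega] at this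
    rw [hco]
    have hch : ((Nat.choose n (n-2*j)) : ℝ) = (n ! : ℝ) / (((n-2*j)! : ℝ) * ((n-(n-2*j))! : ℝ)) :=
      Nat.cast_choose ℝ (by omega)
    rw [show n-(n-2*j) = 2*j from by omega] at hch
    rw [zsmul_eq_mul]
    push_cast
    rw [dfact_cast, hch]
    have f1 : ((n-2*j)! : ℝ) ≠ 0 := Nat.cast_ne_zero.2 (Nat.factorial_ne_zero _)
    have f2 : ((2*j)! : ℝ) ≠ 0 := Nat.cast_ne_zero.2 (Nat.factorial_ne_zero _)
    have f3 : ((j)! : ℝ) ≠ 0 := Nat.cast_ne_zero.2 (Nat.factorial_ne_zero _)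
    field_simp
  · intro i hi hnotim
    simp only [Finset.mem_range] at hi
    have hodd : Odd (n + i) := by
      rcases Nat.even_or_odd (n+i) with he | ho
      · exfalso
        apply hnotim
        simp only [Finset.mem_image, Finset.mem_range]
        have := Nat.even_iff.1 he
        exact ⟨(n-i)/2, by omega, by omega⟩
      · exact ho
    rw [Polynomial.coeff_hermite_of_odd_add hodd]
    simp

lemma hermiteW_eq {ν : ℝ} (hν : 0 < ν) (n : ℕ) (x : ℝ) :
    hermiteW ν n x = (Real.sqrt (2*ν))^n *
      (Polynomial.aeval (Real.sqrt (2*ν) * x) (Polynomial.hermite n)) *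
      Real.exp (-(ν * x^2) / 2) := by
  set c := Real.sqrt (2*ν) with hcdef
  have hc2 : c^2 = 2*ν := Real.sq_sqrt (by positivity)
  have hfun : (fun t : ℝ => Real.exp (-ν * t^2)) = fun t => Real.exp (-((c*t)^2/2)) := by
    funext t; rw [mul_pow, hc2]; ring_nf
  have hg : ContDiff ℝ n (fun y : ℝ => Real.exp (-(y^2/2))) :=
    Real.contDiff_exp.comp (((contDiff_id.pow 2).div_const 2).neg)
  have hid := iteratedDeriv_comp_const_mul hg c
  unfold hermiteW
  rw [hfun]
  have : iteratedDeriv n (fun t => Real.exp (-((c*t)^2/2))) x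
      = c^n * iteratedDeriv n (fun y : ℝ => Real.exp (-(y^2/2))) (c*x) := by
    have := congrFun hid x
    simpa using this
  rw [this, iteratedDeriv_eq_iterate, Polynomial.deriv_gaussian_eq_hermite_mul_gaussian]
  have hsq : (c*x)^2/2 = ν * x^2 := by rw [mul_pow, hc2]; ring
  rw [hsq]
  have h1 : ((-1:ℝ))^n * (-1:ℝ)^n = 1 := by rw [← mul_pow]; norm_num
  have key : Real.exp (ν*x^2/2) * Real.exp (-(ν*x^2)) = Real.exp (-(ν*x^2)/2) := by
    rw [← Real.exp_add]; ring_nf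
  calc (-1:ℝ)^n * Real.exp (ν*x^2/2) *
        (c^n * ((-1)^n * (Polynomial.aeval (c*x) (Polynomial.hermite n)) * Real.exp (-(ν*x^2))))
      = ((-1:ℝ)^n * (-1)^n) * (c^n * (Polynomial.aeval (c*x) (Polynomial.hermite n))) *
        (Real.exp (ν*x^2/2) * Real.exp (-(ν*x^2))) := by ring
    _ = c^n * (Polynomial.aeval (c*x) (Polynomial.hermite n)) * Real.exp (-(ν*x^2)/2) := by
        rw [h1, key]; ring

lemma key_coeff {ν : ℝ} (hν : 0 < ν) (n : ℕ) (x : ℝ) :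
    hermiteW ν n x / ((n ! : ℝ) * 2^((n:ℝ)/2)) =
    Real.exp (-(ν*x^2)/2) *
      ∑ j ∈ Finset.range (n/2+1),
        ((ν*Real.sqrt 2*x)^(n-2*j)/((n-2*j)! : ℝ)) * ((-(ν/2))^j/(j ! : ℝ)) := by
  have h2 : (2:ℝ)^((n:ℝ)/2) = (Real.sqrt 2)^n := by
    rw [show ((n:ℝ)/2) = (1/2:ℝ)*(n:ℝ) from by ring, Real.rpow_mul (by norm_num),
      Real.rpow_natCast, ← Real.sqrt_eq_rpow]
  rw [hermiteW_eq hν, hermite_sum, h2]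
  set d := Real.sqrt ν with hddef
  set s2 := Real.sqrt 2 with hs2def
  have hc : Real.sqrt (2*ν) = s2 * d := Real.sqrt_mul (by norm_num) ν
  have hd : d^2 = ν := Real.sq_sqrt hν.le
  rw [hc, mul_assoc, Finset.sum_mul, Finset.mul_sum, Finset.sum_div, Finset.mul_sum]
  refine Finset.sum_congr rfl (fun j hj => ?_)
  simp only [Finset.mem_range] at hj
  rw [← hd]
  obtain ⟨i, hi⟩ : ∃ i, n = i + 2*j := ⟨n - 2*j, by omega⟩
  subst hi
  simp only [Nat.add_sub_cancel]
  have f1 : ((i+2*j)! : ℝ) ≠ 0 := Nat.cast_ne_zero.2 (Nat.factorial_ne_zero _)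
  have f2 : ((i)! : ℝ) ≠ 0 := Nat.cast_ne_zero.2 (Nat.factorial_ne_zero _)
  have f3 : ((j)! : ℝ) ≠ 0 := Nat.cast_ne_zero.2 (Nat.factorial_ne_zero _)
  have hs2 : s2 ≠ 0 := by
    rw [hs2def]; positivity
  field_simp
  have h12 : ((-1/2:ℝ))^j * 2^j = (-1)^j := by rw [← mul_pow]; norm_num
  linear_combination (-(s2 ^ (i * 2) * s2 ^ (j * 2) * d ^ (i * 2) * d ^ (j * 2) * x ^ i)) * h12

lemma SB_exp_eq (ν : ℝ) (q : Quaternion ℝ) (x : ℝ) (hν : 0 < ν) :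
    NormedSpace.exp (-(ν/2) • (q^2 + ((x : Quaternion ℝ))^2) + (ν * Real.sqrt 2 * x) • q) =
      ∑' n : ℕ, (hermiteW ν n x / ((n.factorial : ℝ) * 2^((n:ℝ)/2))) • q^n := by
  classical
  set a : ℝ := ν * Real.sqrt 2 * x with hadef
  set b : ℝ := -(ν/2) with hbdef
  set s : ℝ := -(ν/2) * x^2 with hsdef
  -- Step A : decompose the argument
  have harg : -(ν/2) • (q^2 + ((x : Quaternion ℝ))^2) + a • q
      = ((s : ℝ) : Quaternion ℝ) + (a • q + b • q^2) := by
    rw [smul_add, ← Quaternion.coe_pow, Quaternion.smul_coe, hsdef, hbdef]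
    abel
  have hCA : Commute (a • q) (b • q^2) := by
    show (a • q) * (b • q^2) = (b • q^2) * (a • q)
    rw [smul_mul_smul_comm, smul_mul_smul_comm, mul_comm a b]
    congr 1
    rw [← pow_succ', ← pow_succ]
  have hscal : NormedSpace.exp (((s : ℝ) : Quaternion ℝ)) = ((Real.exp s : ℝ) : Quaternion ℝ) := by
    have h1 := NormedSpace.map_exp (algebraMap ℝ (Quaternion ℝ)) (continuous_algebraMap ℝ _) s
    rw [← Real.exp_eq_exp_ℝ] at h1
    exact h1.symm
  have expC : NormedSpace.exp (a • q) = ∑' i : ℕ, (a^i / (i.factorial : ℝ)) • q^i := by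
    rw [NormedSpace.exp_eq_tsum ℝ]
    refine tsum_congr fun i => ?_
    rw [smul_pow, smul_smul]
    congr 1
    rw [div_eq_mul_inv, mul_comm]
  have expA : NormedSpace.exp (b • q^2) = ∑' j : ℕ, (b^j / (j.factorial : ℝ)) • q^(2*j) := by
    rw [NormedSpace.exp_eq_tsum ℝ]
    refine tsum_congr fun j => ?_
    rw [smul_pow, ← pow_mul, smul_smul]
    congr 1
    rw [div_eq_mul_inv, mul_comm]
  have hfn : Summable (fun i : ℕ => ‖(a^i / (i.factorial : ℝ)) • q^i‖) := by
    have h : ∀ i : ℕ, ‖(a^i / (i.factorial : ℝ)) • q^i‖ = (|a| * ‖q‖)^i / i.factorial := by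
      intro i
      rw [norm_smul, Real.norm_eq_abs, norm_pow, abs_div, abs_pow, Nat.abs_cast, mul_pow]
      ring
    exact (Real.summable_pow_div_factorial _).congr fun i => (h i).symm
  have hgn : Summable (fun j : ℕ => ‖(b^j / (j.factorial : ℝ)) • q^(2*j)‖) := by
    have h : ∀ j : ℕ, ‖(b^j / (j.factorial : ℝ)) • q^(2*j)‖ = (|b| * ‖q‖^2)^j / j.factorial := by
      intro j
      rw [norm_smul, Real.norm_eq_abs, norm_pow, abs_div, abs_pow, Nat.abs_cast, pow_mul, mul_pow]
      ring
    exact (Real.summable_pow_div_factorial _).congr fun j => (h j).symm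
  have hprod : (∑' i : ℕ, (a^i / (i.factorial : ℝ)) • q^i) *
      (∑' j : ℕ, (b^j / (j.factorial : ℝ)) • q^(2*j))
      = ∑' z : ℕ × ℕ, ((a^z.1 / (z.1.factorial : ℝ)) * (b^z.2 / (z.2.factorial : ℝ))) • q^(z.1 + 2*z.2) := by
    rw [tsum_mul_tsum_of_summable_norm hfn hgn]
    exact tsum_congr fun z => by rw [smul_mul_smul_comm, ← pow_add]
  have hF : Summable (fun z : ℕ × ℕ =>
      ((a^z.1 / (z.1.factorial : ℝ)) * (b^z.2 / (z.2.factorial : ℝ))) • q^(z.1 + 2*z.2)) := by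
    have h := summable_mul_of_summable_norm hfn hgn
    exact h.congr fun z => by rw [smul_mul_smul_comm, ← pow_add]
  set G : ℕ × ℕ → Quaternion ℝ := fun p =>
    if 2*p.2 ≤ p.1 then
      ((a^(p.1-2*p.2) / ((p.1-2*p.2).factorial : ℝ)) * (b^p.2 / (p.2.factorial : ℝ))) • q^p.1
    else 0 with hGdef
  set ι : ℕ × ℕ → ℕ × ℕ := fun z => (z.1 + 2*z.2, z.2) with hιdef
  have hι : Function.Injective ι := by
    intro z w h
    simp only [hιdef, Prod.mk.injEq] at h
    exact Prod.ext (by omega) h.2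
  have hcomp : (G ∘ ι) = fun z : ℕ × ℕ =>
      ((a^z.1 / (z.1.factorial : ℝ)) * (b^z.2 / (z.2.factorial : ℝ))) • q^(z.1 + 2*z.2) := by
    funext z
    simp only [hGdef, hιdef, Function.comp_apply]
    rw [if_pos (by omega)]
    simp only [Nat.add_sub_cancel]
  have hsupp : ∀ p ∉ Set.range ι, G p = 0 := by
    intro p hp
    rcases le_or_gt (2*p.2) p.1 with hle | hlt
    · exact absurd ⟨(p.1-2*p.2, p.2), Prod.ext (by simp [hιdef]; omega) rfl⟩ hp
    · simp only [hGdef]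
      rw [if_neg (by omega)]
  have hGsum : Summable G := by
    rw [← hι.summable_iff hsupp, hcomp]
    exact hF
  have htsumFG : (∑' z : ℕ × ℕ,
      ((a^z.1 / (z.1.factorial : ℝ)) * (b^z.2 / (z.2.factorial : ℝ))) • q^(z.1 + 2*z.2))
      = ∑' p, G p := by
    rw [← hcomp]
    exact hι.tsum_eq (Function.support_subset_iff'.2 hsupp)
  have hfiber : ∀ n : ℕ, HasSum (fun j => G (n, j)) (∑ j ∈ Finset.range (n/2+1), G (n,j)) := by
    intro n
    refine hasSum_sum_of_ne_finset_zero ?_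
    intro j hj
    simp only [Finset.mem_range] at hj
    simp only [hGdef]
    rw [if_neg (by omega)]
  have hmain : HasSum (fun n : ℕ => ∑ j ∈ Finset.range (n/2+1), G (n,j)) (∑' p, G p) :=
    hGsum.hasSum.prod_fiberwise hfiber
  have hfib_eq : ∀ n : ℕ, (∑ j ∈ Finset.range (n/2+1), G (n,j))
      = (∑ j ∈ Finset.range (n/2+1),
          (a^(n-2*j) / ((n-2*j).factorial : ℝ)) * (b^j / (j.factorial : ℝ))) • q^n := by
    intro n
    rw [Finset.sum_smul]
    refine Finset.sum_congr rfl fun j hj => ?_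
    simp only [Finset.mem_range] at hj
    simp only [hGdef]
    rw [if_pos (by omega)]
  have hsummable' : Summable (fun n : ℕ =>
      (∑ j ∈ Finset.range (n/2+1),
        (a^(n-2*j) / ((n-2*j).factorial : ℝ)) * (b^j / (j.factorial : ℝ))) • q^n) :=
    hmain.summable.congr hfib_eq
  -- main computation
  let +nondep : NormedAlgebra ℚ ℍ := .restrictScalars ℚ ℝ ℍ
  rw [harg, NormedSpace.exp_add_of_commute (Quaternion.coe_commute s _),
    NormedSpace.exp_add_of_commute hCA, hscal, expC, expA, hprod, htsumFG,
    hmain.tsum_eq.symm, tsum_congr hfib_eq, Quaternion.coe_mul_eq_smul,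
    ← Summable.tsum_const_smul (Real.exp s) hsummable']
  refine tsum_congr fun n => ?_
  rw [smul_smul]
  congr 1
  have hk := key_coeff hν n x
  rw [show -(ν*x^2)/2 = s from by rw [hsdef]; ring] at hk
  rw [hk]

end Helpers

theorem stmt9 (ν : ℝ) (hν : 0 < ν) (q : Quaternion ℝ) (x : ℝ) :
    SBkernel ν q x =
      ((ν/π)^((3:ℝ)/4)) •
        ∑' n : ℕ, (hermiteW ν n x / ((n.factorial : ℝ) * 2^((n:ℝ)/2))) • q^n := by
  unfold SBkernel
  rw [SB_exp_eq ν q x hν]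
end

section
/- For ν > 0, an imaginary unit quaternion I, x ∈ ℝ, and ψ ∈ L²(ℝ;ℍ), the quaternionic Segal–Bargmann transform evaluated on the imaginary slice satisfies B_ν(ψ)(Ix/(√2 ν)) = (ν/π)^{3/4} e^{x²/(4ν)} F_I(e^{-νy²/2}ψ)(x), where F_I(φ)(x) = ∫_ℝ e^{Ixy} φ(y) dy is the left one-dimensional quaternionic Fourier transform. -/
open MeasureTheory Real Quaternion

/-- The left one-dimensional quaternionic Fourier transform. -/
noncomputable def QFourier (I : Quaternion ℝ) (φ : ℝ → Quaternion ℝ) (x : ℝ) :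
    Quaternion ℝ :=
  ∫ y : ℝ, NormedSpace.exp ((x * y) • I) * φ y

theorem stmt16 (ν : ℝ) (hν : 0 < ν) (I : Quaternion ℝ) (hI : I^2 = -1)
    (ψ : ℝ → Quaternion ℝ) (hψ : MemLp ψ 2 (volume : Measure ℝ)) (x : ℝ) :
    Bargmann ν ψ ((x / (Real.sqrt 2 * ν)) • I) =
      (((ν/π)^((3:ℝ)/4) * Real.exp (x^2 / (4*ν)) : ℝ)) •
        QFourier I (fun y => Real.exp (-ν * y^2 / 2) • ψ y) x := by
  
  unfold Bargmann QFourier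
  rw [← integral_smul]
  refine integral_congr_ae (Filter.Eventually.of_forall fun y => ?_)
  have h2 : Real.sqrt 2 ^ 2 = 2 := Real.sq_sqrt (by norm_num)
  have hs2 : Real.sqrt 2 ≠ 0 := by positivity
  set r : ℝ := x^2/(4*ν) - ν*y^2/2 with hr
  have hargs : -(ν/2) • (((x / (Real.sqrt 2 * ν)) • I)^2 + ((y : Quaternion ℝ))^2)
      + (ν * Real.sqrt 2 * y) • ((x / (Real.sqrt 2 * ν)) • I)
      = ((r : ℝ) : Quaternion ℝ) + (x * y) • I := by
    have h1 : ((x / (Real.sqrt 2 * ν)) • I)^2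
        = ((-(x^2/(2*ν^2)) : ℝ) : Quaternion ℝ) := by
      rw [smul_pow, hI, smul_neg, ← Quaternion.coe_one, Quaternion.smul_coe, mul_one,
        ← Quaternion.coe_neg]
      norm_cast
      rw [div_pow, mul_pow, h2]
    rw [h1, smul_smul]
    have h3 : ν * Real.sqrt 2 * y * (x / (Real.sqrt 2 * ν)) = x * y := by
      field_simp
    rw [h3]
    congr 1
    rw [← Quaternion.coe_pow, ← Quaternion.coe_add, Quaternion.smul_coe]
    congr 1
    rw [hr]
    field_simp
    ring
  simp only [SBkernel]
  rw [hargs]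
  have hcomm : Commute ((r : ℝ) : Quaternion ℝ) ((x * y) • I) :=
    Quaternion.coe_commute r _
  rw [NormedSpace.exp_add_of_commute_of_mem_ball (𝕂 := ℝ) hcomm
    ((NormedSpace.expSeries_radius_eq_top ℝ ℍ).symm ▸ edist_lt_top _ _)
    ((NormedSpace.expSeries_radius_eq_top ℝ ℍ).symm ▸ edist_lt_top _ _)]
  have hexp : NormedSpace.exp ((r : ℝ) : Quaternion ℝ)
      = ((Real.exp r : ℝ) : Quaternion ℝ) := by
    rw [← Quaternion.algebraMap_def, ← NormedSpace.algebraMap_exp_comm,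
      Real.exp_eq_exp_ℝ]
  rw [hexp]
  rw [smul_mul_assoc, mul_assoc, Quaternion.coe_mul_eq_smul, mul_smul_comm,
    smul_smul, smul_smul]
  congr 1
  rw [mul_assoc, ← Real.exp_add]
  congr 1
  rw [hr]; ring
end
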